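/- Let φ : R → S be a flat homomorphism of commutative rings such that either R is Noetherian or φ satisfies INC. Let p be a prime ideal of R such that the extension pS is a prime ideal of S. Then for every p-primary ideal I of R, the extension IS is a pS-primary ideal of S. -/
import Mathlib


section OhmRushDefs

variable {R S : Type*} [CommRing R] [CommRing S]

/-- The Ohm–Rush content of an element `s` of an `R`-algebra `S` (given by a ring
homomorphism `f : R →+* S`): the intersection of all ideals `I` of `R` with `s ∈ IS`. -/
def ORContent (f : R →+* S) (s : S) : Ideal R :=
  sInf {I : Ideal R | s ∈ Ideal.map f I}

/-- `S` is an Ohm–Rush `R`-algebra if every `s ∈ S` lies in the extension of its content. -/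
def IsOhmRushAlgebra (f : R →+* S) : Prop :=
  ∀ s : S, s ∈ Ideal.map f (ORContent f s)

/-- Flatness of a ring homomorphism. -/
def RingHomFlat (f : R →+* S) : Prop :=
  letI := f.toAlgebra; Module.Flat R S

/-- Faithful flatness of a ring homomorphism. -/
def RingHomFaithfullyFlat (f : R →+* S) : Prop :=
  letI := f.toAlgebra; Module.FaithfullyFlat R S

/-- Module-freeness of a ring homomorphism. -/
def RingHomFree (f : R →+* S) : Prop :=
  letI := f.toAlgebra; Module.Free R S

/-- Weak content algebra: Ohm–Rush and `√c(fg) = √(c(f)c(g))`. -/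
def IsWeakContentAlgebra (f : R →+* S) : Prop :=
  IsOhmRushAlgebra f ∧ ∀ s t : S,
    (ORContent f (s * t)).radical = (ORContent f s * ORContent f t).radical

/-- Semicontent algebra: faithfully flat Ohm–Rush, and for every multiplicative subset `W`
of `R`, if `c(s)R_W = R_W` then `c(st)R_W = c(t)R_W`. -/
def IsSemicontentAlgebra (f : R →+* S) : Prop :=
  IsOhmRushAlgebra f ∧ RingHomFaithfullyFlat f ∧
    ∀ (W : Submonoid R) (s t : S),
      Ideal.map (algebraMap R (Localization W)) (ORContent f s) = ⊤ →
      Ideal.map (algebraMap R (Localization W)) (ORContent f (s * t)) =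
        Ideal.map (algebraMap R (Localization W)) (ORContent f t)

/-- Content algebra: faithfully flat Ohm–Rush satisfying the Dedekind–Mertens type formula. -/
def IsContentAlgebra (f : R →+* S) : Prop :=
  IsOhmRushAlgebra f ∧ RingHomFaithfullyFlat f ∧
    ∀ s t : S, ∃ n : ℕ, 0 < n ∧
      ORContent f s ^ n * ORContent f t = ORContent f s ^ (n - 1) * ORContent f (s * t)

/-- A ring homomorphism satisfies INC if comparable primes of `S` with the same
contraction to `R` are equal. -/
def SatisfiesINC (f : R →+* S) : Prop :=
  ∀ Q Q' : Ideal S, Q.IsPrime → Q'.IsPrime → Q ≤ Q' →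
    Ideal.comap f Q = Ideal.comap f Q' → Q = Q'

/-- A valuation domain: a domain whose divisibility is total. -/
def IsValuationDomain (A : Type*) [CommRing A] : Prop :=
  IsDomain A ∧ ∀ a b : A, ∃ c : A, a * c = b ∨ b * c = a

/-- A Prüfer domain: a domain whose localization at every maximal ideal is a
valuation domain. -/
def IsPruferDomain (A : Type*) [CommRing A] : Prop :=
  IsDomain A ∧ ∀ (P : Ideal A) (hP : P.IsMaximal),
    haveI := hP.isPrime
    IsValuationDomain (Localization.AtPrime P)

end OhmRushDefs

section AuxProof

open Ideal TensorProduct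

variable {R S : Type*} [CommRing R] [CommRing S]

/-- Key flatness lemma: for a flat ring map, extension commutes with colon by an element. -/
private lemma flat_colon_aux (φ : R →+* S) (hflat : RingHomFlat φ) (J : Ideal R) (r : R) {x : S}
    (hx : φ r * x ∈ J.map φ) : x ∈ (J.colon (Ideal.span {r})).map φ := by
  letI : Algebra R S := φ.toAlgebra
  haveI : Module.Flat R S := hflat
  have halg : algebraMap R S = φ := rfl
  set C := J.colon (Ideal.span {r}) with hCdef
  have hle : (C : Submodule R R) ≤
      Submodule.comap (r • (LinearMap.id : R →ₗ[R] R)) (J : Submodule R R) := by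
    intro a ha
    have h1 : a * r ∈ J := Ideal.mem_colon_span_singleton.mp ha
    simpa [smul_eq_mul, mul_comm] using h1
  let f : (R ⧸ C) →ₗ[R] (R ⧸ J) := Submodule.mapQ _ _ _ hle
  have hf : Function.Injective f := by
    rw [← LinearMap.ker_eq_bot, eq_bot_iff]
    intro a ha
    obtain ⟨a, rfl⟩ := Submodule.Quotient.mk_surjective _ a
    rw [LinearMap.mem_ker, Submodule.mapQ_apply] at ha
    have ha' : Submodule.Quotient.mk (p := (J : Submodule R R)) (r * a) = 0 := by
      simpa only [LinearMap.smul_apply, LinearMap.id_coe, id_eq, smul_eq_mul] using ha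
    have h1 : r * a ∈ J := (Submodule.Quotient.mk_eq_zero _).mp ha'
    have h2 : a ∈ C := Ideal.mem_colon_span_singleton.mpr (by rwa [mul_comm])
    rw [Submodule.mem_bot]
    exact (Submodule.Quotient.mk_eq_zero _).mpr h2
  have hinj : Function.Injective (f.lTensor S) :=
    Module.Flat.lTensor_preserves_injective_linearMap f hf
  have key : (x ⊗ₜ[R] (Ideal.Quotient.mk C 1) : S ⊗[R] (R ⧸ C)) = 0 := by
    apply hinj
    rw [map_zero, LinearMap.lTensor_tmul]
    have hfr : f (Ideal.Quotient.mk C 1) = Ideal.Quotient.mk J r := by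
      show f (Submodule.Quotient.mk 1) = _
      rw [Submodule.mapQ_apply]
      simp [smul_eq_mul]
    rw [hfr]
    have h2 : TensorProduct.tensorQuotEquivQuotSMul S J (x ⊗ₜ Ideal.Quotient.mk J r) = 0 := by
      rw [TensorProduct.tensorQuotEquivQuotSMul_tmul_mk, Submodule.Quotient.mk_eq_zero,
        Ideal.smul_top_eq_map]
      show r • x ∈ J.map (algebraMap R S)
      rw [Algebra.smul_def, halg]
      exact hx
    exact ((TensorProduct.tensorQuotEquivQuotSMul S J).map_eq_zero_iff).mp h2
  have h3 : TensorProduct.tensorQuotEquivQuotSMul S C (x ⊗ₜ Ideal.Quotient.mk C 1)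
      = Submodule.Quotient.mk x := by
    rw [TensorProduct.tensorQuotEquivQuotSMul_tmul_mk, one_smul]
  rw [key, map_zero] at h3
  have h4 : x ∈ C • (⊤ : Submodule R S) := (Submodule.Quotient.mk_eq_zero _).mp h3.symm
  rw [Ideal.smul_top_eq_map] at h4
  simpa [halg] using h4

/-- For a `p`-primary ideal and `r ∉ p`, dividing an extended ideal by `φ r` does nothing. -/
private lemma flat_primary_mem (φ : R →+* S) (hflat : RingHomFlat φ) {I p : Ideal R}
    (hI : I.IsPrimary) (hIrad : I.radical = p) {r : R} (hr : r ∉ p) {x : S}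
    (hx : φ r * x ∈ I.map φ) : x ∈ I.map φ := by
  have h := flat_colon_aux φ hflat I r hx
  have hcol : I.colon (Ideal.span {r}) = I := by
    refine le_antisymm (fun a ha => ?_) (fun a ha => Ideal.mem_colon_span_singleton.mpr
      (Ideal.mul_mem_right r I ha))
    rcases (Ideal.isPrimary_iff.mp hI).2 (Ideal.mem_colon_span_singleton.mp ha) with h' | h'
    · exact h'
    · exact absurd (hIrad ▸ h') hr
  rwa [hcol] at h

private lemma comap_map_p (φ : R →+* S) (hflat : RingHomFlat φ) {p : Ideal R}
    (hp : p.IsPrime) (hpS : (p.map φ).IsPrime) : (p.map φ).comap φ = p := by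
  refine le_antisymm (fun r hr => ?_) Ideal.le_comap_map
  by_contra hrp
  have h1 : φ r * 1 ∈ p.map φ := by simpa using Ideal.mem_comap.mp hr
  have h2 : (1 : S) ∈ p.map φ := flat_primary_mem φ hflat hp.isPrimary hp.radical hrp h1
  exact hpS.ne_top ((Ideal.eq_top_iff_one _).mpr h2)

/-- Every element of a minimal prime over `C` has a power that multiplies into `C`
modulo something outside the prime. -/
private lemma exists_pow_aux {C P : Ideal S} (hP : P ∈ C.minimalPrimes) {x : S} (hx : x ∈ P) :
    ∃ (n : ℕ) (w : S), w ∉ P ∧ w * x ^ n ∈ C := by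
  by_contra h
  push_neg at h
  haveI hPp : P.IsPrime := hP.1.1
  have hone : (1 : S) ∉ P := (Ideal.ne_top_iff_one P).mp hPp.ne_top
  let T : Submonoid S :=
    { carrier := {y | ∃ n : ℕ, ∃ w : S, w ∉ P ∧ w * x ^ n = y}
      one_mem' := ⟨0, 1, hone, by ring⟩
      mul_mem' := by
        rintro a b ⟨n, w, hw, rfl⟩ ⟨m, v, hv, rfl⟩
        exact ⟨n + m, w * v, fun hmem => ((hPp.mem_or_mem hmem).elim hw hv), by ring⟩ }
  have hdisj : Disjoint (C : Set S) (T : Set S) := Set.disjoint_left.mpr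
    (fun y hy => by rintro ⟨n, w, hw, rfl⟩; exact h n w hw hy)
  obtain ⟨Q, hQp, hCQ, hQT⟩ := Ideal.exists_le_prime_disjoint C T hdisj
  have hQP : Q ≤ P := fun y hy => by
    by_contra hyP
    exact Set.disjoint_left.mp hQT hy ⟨0, y, hyP, by ring⟩
  have hPQ : P ≤ Q := hP.2 ⟨hQp, hCQ⟩ hQP
  exact Set.disjoint_left.mp hQT (hPQ hx) ⟨1, 1, hone, by ring⟩

/-- The INC case of the main theorem. -/
private lemma inc_step (φ : R →+* S) (hflat : RingHomFlat φ) (hinc : SatisfiesINC φ)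
    {p : Ideal R} (hp : p.IsPrime) (hpS : (p.map φ).IsPrime)
    {I : Ideal R} (hI : I.IsPrimary) (hIrad : I.radical = p)
    (hrad : (I.map φ).radical = p.map φ)
    {s t : S} (hst : s * t ∈ I.map φ) (ht : t ∉ p.map φ) : s ∈ I.map φ := by
  by_contra hs
  set C := (I.map φ).colon (Ideal.span {s}) with hCdef
  have htC : t ∈ C := Ideal.mem_colon_span_singleton.mpr (by rwa [mul_comm])
  have hCtop : C ≠ ⊤ := by
    intro h
    have h1 : (1 : S) ∈ C := h ▸ Submodule.mem_top
    exact hs (by simpa using Ideal.mem_colon_span_singleton.mp h1)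
  obtain ⟨M, hM, hCM⟩ := Ideal.exists_le_maximal C hCtop
  haveI := hM.isPrime
  obtain ⟨P, hPmin, hPM⟩ := Ideal.exists_minimalPrimes_le hCM
  haveI hPprime : P.IsPrime := hPmin.1.1
  have hIC : I.map φ ≤ C := fun z hz =>
    Ideal.mem_colon_span_singleton.mpr (Ideal.mul_mem_right s _ hz)
  have hIP : I.map φ ≤ P := le_trans hIC hPmin.1.2
  have hpSP : p.map φ ≤ P := by
    have h1 : (I.map φ).radical ≤ P.radical := Ideal.radical_mono hIP
    rwa [hrad, hPprime.radical] at h1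
  have hcom : P.comap φ ≤ p := by
    intro r hr
    by_contra hrp
    obtain ⟨n, w, hwP, hwC⟩ := exists_pow_aux hPmin (Ideal.mem_comap.mp hr)
    have h1 : (w * φ r ^ n) * s ∈ I.map φ := Ideal.mem_colon_span_singleton.mp hwC
    have h2 : φ (r ^ n) * (w * s) ∈ I.map φ := by
      rw [map_pow]
      convert h1 using 1
      ring
    have hrn : r ^ n ∉ p := fun hmem => hrp (hp.mem_of_pow_mem n hmem)
    have h3 : w * s ∈ I.map φ := flat_primary_mem φ hflat hI hIrad hrn h2
    exact hwP (hPmin.1.2 (Ideal.mem_colon_span_singleton.mpr h3))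
  have hcomeq : P.comap φ = p :=
    le_antisymm hcom (le_trans Ideal.le_comap_map (Ideal.comap_mono hpSP))
  have hcomeq2 : (p.map φ).comap φ = P.comap φ :=
    le_antisymm (Ideal.comap_mono hpSP) (hcomeq ▸ Ideal.le_comap_map)
  have hPeq := hinc (p.map φ) P hpS hPprime hpSP hcomeq2
  exact ht (hPeq ▸ hPmin.1.2 htC)

end AuxProof

section NoethProof

open Ideal

variable {R S : Type*} [CommRing R] [CommRing S]

private lemma ringHomFlat_comp {T : Type*} [CommRing T] (φ : R →+* S) (ψ : S →+* T)
    (h1 : RingHomFlat φ) (h2 : RingHomFlat ψ) : RingHomFlat (ψ.comp φ) := by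
  letI : Algebra R S := φ.toAlgebra
  letI : Algebra S T := ψ.toAlgebra
  letI : Algebra R T := (ψ.comp φ).toAlgebra
  haveI : IsScalarTower R S T := IsScalarTower.of_algebraMap_eq fun x => rfl
  haveI : Module.Flat R S := h1
  haveI : Module.Flat S T := h2
  show Module.Flat R T
  exact Module.Flat.trans R S T

/-- The Noetherian case of the main theorem. -/
private lemma noeth_step (φ : R →+* S) (hflat : RingHomFlat φ) (hN : IsNoetherianRing R)
    {p : Ideal R} (hp : p.IsPrime) (hpS : (p.map φ).IsPrime)
    {I : Ideal R} (hI : I.IsPrimary) (hIrad : I.radical = p)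
    {s t : S} (hst : s * t ∈ I.map φ) (ht : t ∉ p.map φ) : s ∈ I.map φ := by
  classical
  haveI : IsNoetherianRing R := hN
  haveI := hp
  set U : Submonoid S := Submonoid.map φ.toMonoidHom p.primeCompl with hU
  set g : S →+* Localization U := algebraMap S (Localization U) with hg
  set φ' : R →+* Localization U := g.comp φ with hφ'
  have hgflat : RingHomFlat g := by
    have halgeq : g.toAlgebra = (inferInstance : Algebra S (Localization U)) :=
      Algebra.algebra_ext _ _ fun r => rfl
    have hbase : Module.Flat S (Localization U) := IsLocalization.flat (Localization U) U
    unfold RingHomFlat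
    rw [halgeq]
    exact hbase
  have hflat' : RingHomFlat φ' := ringHomFlat_comp φ g hflat hgflat
  have hcomap := comap_map_p φ hflat hp hpS
  have hunit : ∀ r : R, r ∉ p → IsUnit (φ' r) := fun r hr =>
    IsLocalization.map_units (M := U) (Localization U) ⟨φ r, ⟨r, hr, rfl⟩⟩
  have hsat : ∀ (K : Ideal S) (x : S), g x ∈ K.map g → ∃ u ∈ U, u * x ∈ K := by
    intro K x hx
    obtain ⟨⟨k, u⟩, he⟩ := (IsLocalization.mem_map_algebraMap_iff U (Localization U)).mp hx
    rw [← _root_.map_mul] at he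
    obtain ⟨c, hc⟩ := (IsLocalization.eq_iff_exists U (Localization U)).mp he
    refine ⟨(c : S) * (u : S), U.mul_mem c.2 u.2, ?_⟩
    have h2 : (c : S) * (x * (u : S)) = (c : S) * (k : S) := hc
    have h3 : ((c : S) * (u : S)) * x = (c : S) * (k : S) := by rw [← h2]; ring
    rw [h3]
    exact K.mul_mem_left _ k.2
  have hrU : ∀ r : R, r ∉ p → φ r ∉ p.map φ := fun r hr hmem =>
    hr (hcomap ▸ Ideal.mem_comap.mpr hmem)
  have hmapmap : (p.map φ).map g = p.map φ' := Ideal.map_map φ g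
  have hmapmapI : (I.map φ).map g = I.map φ' := Ideal.map_map φ g
  have pstep : ∀ w : Localization U, g t * w ∈ p.map φ' → w ∈ p.map φ' := by
    intro w hw
    obtain ⟨⟨w₀, u⟩, hwu⟩ := IsLocalization.surj (M := U) w
    have h1 : g (t * w₀) ∈ (p.map φ).map g := by
      rw [hmapmap, _root_.map_mul, ← hwu, ← mul_assoc]
      exact Ideal.mul_mem_right _ _ hw
    obtain ⟨u', hu', huw⟩ := hsat _ _ h1
    obtain ⟨r, hr, rfl⟩ := hu'
    have hw₀ : w₀ ∈ p.map φ := by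
      rw [← mul_assoc] at huw
      rcases hpS.mem_or_mem huw with h | h
      · rcases hpS.mem_or_mem h with h' | h'
        · exact absurd h' (hrU r hr)
        · exact absurd h' ht
      · exact h
    obtain ⟨v, hv⟩ := (IsLocalization.map_units (M := U) (Localization U) u).exists_right_inv
    have hwe : w = g w₀ * v := by
      calc w = w * (g (u : S) * v) := by rw [hv, mul_one]
        _ = (w * g (u : S)) * v := by ring
        _ = g w₀ * v := by rw [hwu]
    rw [hwe]
    exact Ideal.mul_mem_right _ _ (hmapmap ▸ Ideal.mem_map_of_mem g hw₀)
  set Good : Ideal R → Prop := fun c =>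
    ∀ ξ : Localization U, g t * ξ ∈ I.map φ' → ξ ∈ c.map φ' → ξ ∈ I.map φ' with hGoodDef
  have step : ∀ (c : Ideal R), I ≤ c → ∀ b : R, p * Ideal.span {b} ≤ c →
      Good c → Good (c ⊔ Ideal.span {b}) := by
    intro c hIc b hpb hgood ξ hξt hξ
    rw [Ideal.map_sup] at hξ
    obtain ⟨ζ, hζ, η, hη, rfl⟩ := Submodule.mem_sup.mp hξ
    rw [Ideal.map_span, Set.image_singleton] at hη
    obtain ⟨w, hwe⟩ := Ideal.mem_span_singleton'.mp hη
    suffices hηc : η ∈ c.map φ' by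
      exact hgood _ hξt (Ideal.add_mem _ hζ hηc)
    have h3 : g t * η ∈ c.map φ' := by
      have h4 : g t * (ζ + η) ∈ c.map φ' := Ideal.map_mono hIc hξt
      have h5 : g t * ζ ∈ c.map φ' := Ideal.mul_mem_left _ _ hζ
      have he : g t * η = g t * (ζ + η) - g t * ζ := by ring
      rw [he]
      exact Submodule.sub_mem _ h4 h5
    have h2 : φ' b * (g t * w) ∈ c.map φ' := by
      rw [← hwe] at h3
      convert h3 using 1
      ring
    have h5 := flat_colon_aux φ' hflat' c b h2
    by_cases hq : c.colon (Ideal.span {b}) ≤ p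
    · have h6 : g t * w ∈ p.map φ' := Ideal.map_mono hq h5
      have h7 : w ∈ p.map φ' := pstep w h6
      have h8 : w * φ' b ∈ (p * Ideal.span {b}).map φ' := by
        rw [Ideal.map_mul]
        exact Ideal.mul_mem_mul h7 (Ideal.mem_map_of_mem φ' (Ideal.mem_span_singleton_self b))
      rw [← hwe]
      exact Ideal.map_mono hpb h8
    · obtain ⟨r, hrc, hrp⟩ := SetLike.not_le_iff_exists.mp hq
      have hrb : r * b ∈ c := Ideal.mem_colon_span_singleton.mp hrc
      obtain ⟨v, hv⟩ := (hunit r hrp).exists_right_inv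
      have hφb : φ' b ∈ c.map φ' := by
        have h9 : v * φ' (r * b) ∈ c.map φ' := Ideal.mul_mem_left _ _ (Ideal.mem_map_of_mem φ' hrb)
        have h10 : φ' b = v * φ' (r * b) := by
          calc φ' b = (φ' r * v) * φ' b := by rw [hv, one_mul]
            _ = v * (φ' r * φ' b) := by ring
            _ = v * φ' (r * b) := by rw [_root_.map_mul]
        rw [h10]
        exact h9
      rw [← hwe]
      exact Ideal.mul_mem_left _ _ hφb
  have inner : ∀ (k : ℕ), Good (p ^ (k + 1) ⊔ I) → Good (p ^ k ⊔ I) := by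
    intro k hgood
    obtain ⟨F, hF⟩ := (IsNoetherian.noetherian (p ^ k) : (p ^ k).FG)
    rw [Ideal.submodule_span_eq] at hF
    have claim : ∀ G : Finset R, (∀ y ∈ G, y ∈ p ^ k) →
        Good ((p ^ (k + 1) ⊔ I) ⊔ Ideal.span ↑G) := by
      intro G
      induction G using Finset.induction_on with
      | empty =>
        intro _
        have he : ((p ^ (k + 1) ⊔ I) ⊔ Ideal.span (↑(∅ : Finset R) : Set R)) = p ^ (k + 1) ⊔ I := by
          simp
        rwa [he]
      | @insert b G hbG ih =>
        intro hsub
        have hsub' : ∀ y ∈ G, y ∈ p ^ k := fun y hy => hsub y (Finset.mem_insert_of_mem hy)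
        have hb : b ∈ p ^ k := hsub b (Finset.mem_insert_self b G)
        have hGd := ih hsub'
        have hIc : I ≤ (p ^ (k + 1) ⊔ I) ⊔ Ideal.span ↑G := le_sup_of_le_left le_sup_right
        have hpb : p * Ideal.span {b} ≤ (p ^ (k + 1) ⊔ I) ⊔ Ideal.span ↑G := by
          have h1 : Ideal.span {b} ≤ p ^ k := by
            rw [Ideal.span_le]
            simpa using hb
          have h2 : p * Ideal.span {b} ≤ p * p ^ k := Ideal.mul_mono_right h1
          have h3 : p * p ^ k = p ^ (k + 1) := by rw [pow_succ, mul_comm]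
          exact le_trans h2 (h3 ▸ le_sup_of_le_left le_sup_left)
        have hstep := step _ hIc b hpb hGd
        have heq : ((p ^ (k + 1) ⊔ I) ⊔ Ideal.span ↑G) ⊔ Ideal.span {b}
            = (p ^ (k + 1) ⊔ I) ⊔ Ideal.span ↑(insert b G) := by
          rw [Finset.coe_insert, Ideal.span_insert, sup_comm (Ideal.span {b}), ← sup_assoc]
        rwa [heq] at hstep
    have h := claim F (fun y hy => by
      rw [← hF]
      exact Ideal.subset_span (Finset.mem_coe.mpr hy))
    have heq2 : (p ^ (k + 1) ⊔ I) ⊔ Ideal.span ↑F = p ^ k ⊔ I := by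
      rw [hF]
      refine le_antisymm (sup_le (sup_le ?_ le_sup_right) le_sup_left)
        (sup_le le_sup_right (le_sup_of_le_left le_sup_right))
      exact le_trans (Ideal.pow_le_pow_right (Nat.le_succ k)) le_sup_left
    rwa [heq2] at h
  obtain ⟨n, hn⟩ := Ideal.exists_radical_pow_le_of_fg I
    (by rw [hIrad]; exact IsNoetherian.noetherian p)
  rw [hIrad] at hn
  have hGn : Good (p ^ n ⊔ I) := by
    have he : p ^ n ⊔ I = I := sup_eq_right.mpr hn
    rw [he]
    intro ξ _ h2
    exact h2
  have key : ∀ j : ℕ, Good (p ^ (n - j) ⊔ I) := by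
    intro j
    induction j with
    | zero => simpa using hGn
    | succ j ih =>
      rcases Nat.eq_zero_or_pos (n - j) with h | h
      · have he : n - (j + 1) = n - j := by omega
        rwa [he]
      · obtain ⟨m, hm⟩ : ∃ m, n - j = m + 1 := ⟨n - j - 1, by omega⟩
        have hm2 : n - (j + 1) = m := by omega
        rw [hm2]
        exact inner m (hm ▸ ih)
  have hGtop : Good ⊤ := by
    have h0 := key n
    rwa [Nat.sub_self, pow_zero, Ideal.one_eq_top, top_sup_eq] at h0
  have hgs : g s ∈ I.map φ' := by
    refine hGtop (g s) ?_ (by rw [Ideal.map_top]; trivial)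
    have he : g t * g s = g (s * t) := by rw [_root_.map_mul, mul_comm]
    rw [he, ← hmapmapI]
    exact Ideal.mem_map_of_mem g hst
  rw [← hmapmapI] at hgs
  obtain ⟨u, hu, hus⟩ := hsat _ _ hgs
  obtain ⟨r, hr, rfl⟩ := hu
  exact flat_primary_mem φ hflat hI hIrad hr hus

end NoethProof

/-- If `φ : R → S` is flat and either `R` is Noetherian or `φ` satisfies
INC, and `p` is a prime of `R` with `pS` prime, then for every `p`-primary ideal `I` of
`R`, the extension `IS` is `pS`-primary. -/
theorem primary_extends_to_primary {R S : Type*} [CommRing R] [CommRing S]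
    (φ : R →+* S) (hflat : RingHomFlat φ)
    (hyp : IsNoetherianRing R ∨ SatisfiesINC φ)
    (p : Ideal R) (hp : p.IsPrime) (hpS : (p.map φ).IsPrime)
    (I : Ideal R) (hI : I.IsPrimary) (hIrad : I.radical = p) :
    (I.map φ).IsPrimary ∧ (I.map φ).radical = p.map φ := by
  have hrad : (I.map φ).radical = p.map φ := by
    refine le_antisymm ?_ ?_
    · have h1 : I.map φ ≤ p.map φ := Ideal.map_mono (hIrad ▸ Ideal.le_radical)
      have h2 := Ideal.radical_mono h1
      rwa [hpS.radical] at h2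
    · have h3 : p.map φ = (I.radical).map φ := by rw [hIrad]
      rw [h3]
      exact Ideal.map_radical_le (f := φ)
  refine ⟨?_, hrad⟩
  rw [Ideal.isPrimary_iff]
  constructor
  · intro htop
    rw [htop, Ideal.radical_top] at hrad
    exact hpS.ne_top hrad.symm
  · intro x y hxy
    by_cases hy : y ∈ (Ideal.map φ I).radical
    · exact Or.inr hy
    · rw [hrad] at hy
      rcases hyp with hN | hinc
      · exact Or.inl (noeth_step φ hflat hN hp hpS hI hIrad hxy hy)
      · exact Or.inl (inc_step φ hflat hinc hp hpS hI hIrad hrad hxy hy)
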